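/- The quaternionic Cayley transform maps the punctured unit sphere into the Siegel domain boundary: if (q,p) ∈ ℍⁿ × ℍ satisfies |q|² + |p|² = 1 and p ≠ −1, then the point (q',p') with q'ᵃ = (1+p)⁻¹·qᵃ for each a and p' = (1+p)⁻¹(1−p) satisfies Re p' = |q'|². -/

import Mathlib

open scoped Quaternion
noncomputable section
def qnormSq {n : ℕ} (q : Fin n → ℍ[ℝ]) : ℝ := ∑ a, Quaternion.normSq (q a)

theorem cayley_sphere_to_siegel (n : ℕ) (q : Fin n → ℍ[ℝ]) (p : ℍ[ℝ])
    (hsph : qnormSq q + Quaternion.normSq p = 1) (hp : p ≠ -1) :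
    ((1 + p)⁻¹ * (1 - p)).re = qnormSq (fun a => (1 + p)⁻¹ * q a) := by
  have hs : (1 + p) ≠ 0 := by
    intro h
    apply hp
    rw [eq_neg_iff_add_eq_zero, add_comm]
    exact h
  have hns : Quaternion.normSq (1 + p) ≠ 0 := Quaternion.normSq_ne_zero.2 hs
  have hrhs : qnormSq (fun a => (1 + p)⁻¹ * q a)
      = (Quaternion.normSq (1 + p))⁻¹ * qnormSq q := by
    simp only [qnormSq, map_mul, Quaternion.normSq_inv, Finset.mul_sum]
  rw [hrhs, Quaternion.inv_def]
  have hq : qnormSq q = 1 - Quaternion.normSq p := by linarith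
  rw [hq, smul_mul_assoc, Quaternion.re_smul, smul_eq_mul]
  congr 1
  simp [Quaternion.re_mul, Quaternion.normSq_def']
  ring
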